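/- (Corollary 3.2(b).) If (Y(1),Y(0)) is conditionally independent of (R(1),R(0)) given S, then theta_sfe = E[tau(S) lambda(S)], where tau(s) = E[Y(1) - Y(0) | S = s] and lambda(s) = Lambda^{-1} E[R(1)|S=s] E[R(0)|S=s] / (nu E[R(1)|S=s] + (1-nu) E[R(0)|S=s]) with Lambda = E[E[R(1)|S] E[R(0)|S] / (nu E[R(1)|S] + (1-nu) E[R(0)|S])]. -/

import Mathlib

open MeasureTheory ProbabilityTheory

section Aux

variable {Ω : Type*} {𝒮 : Type*} [MeasurableSpace 𝒮]

/-- A function measurable w.r.t. `comap S` is constant on atoms of `S`. -/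
lemma const_on_atom {S : Ω → 𝒮} {g : Ω → ℝ}
    (hg : Measurable[MeasurableSpace.comap S inferInstance] g)
    {ω ω' : Ω} (h : S ω = S ω') : g ω = g ω' := by
  have hms : MeasurableSet[MeasurableSpace.comap S inferInstance] (g ⁻¹' {g ω'}) :=
    hg (measurableSet_singleton (g ω'))
  obtain ⟨t, -, ht⟩ := hms
  have hω' : ω' ∈ S ⁻¹' t := by
    rw [show S ⁻¹' t = g ⁻¹' {g ω'} from ht]; exact rfl
  have hω : ω ∈ S ⁻¹' t := by simpa [Set.mem_preimage, h] using hω'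
  have : ω ∈ g ⁻¹' {g ω'} := by rwa [← ht]
  simpa using this

end Aux

/-- Corollary 3.2(b): if `(Y(1), Y(0))` is conditionally independent of `(R(1), R(0))` given `S`,
then `θ_sfe = E[τ(S) λ(S)]`, where `τ(s) = E[Y(1) - Y(0) | S = s]` and
`λ(s) = Λ⁻¹ E[R(1)|S=s] E[R(0)|S=s] / (ν E[R(1)|S=s] + (1-ν) E[R(0)|S=s])` with
`Λ = E[E[R(1)|S] E[R(0)|S] / (ν E[R(1)|S] + (1-ν) E[R(0)|S])]`.
Here `q d`, `qy d` and `τ` are versions of `E[R(d)|S=·]`, `E[R(d)Y(d)|S=·]`, `E[Y(1)-Y(0)|S=·]`. -/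
theorem corollary_3_2_b
    {Ω : Type*} [MeasurableSpace Ω] [StandardBorelSpace Ω] [Nonempty Ω]
    (μ : Measure Ω) [IsProbabilityMeasure μ]
    {𝒮 : Type*} [Fintype 𝒮] [MeasurableSpace 𝒮] [MeasurableSingletonClass 𝒮]
    (Y : Fin 2 → Ω → ℝ) (R : Fin 2 → Ω → ℝ) (S : Ω → 𝒮)
    (hYmeas : ∀ d, Measurable (Y d)) (hRmeas : ∀ d, Measurable (R d))
    (hSmeas : Measurable S)
    (hR01 : ∀ d ω, R d ω = 0 ∨ R d ω = 1)
    (hYint : ∀ d, Integrable (Y d) μ)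
    (hRpos : ∀ d, 0 < ∫ ω, R d ω ∂μ)
    (ν : ℝ) (hν : 0 < ν ∧ ν < 1)
    (hle : MeasurableSpace.comap S inferInstance ≤ ‹MeasurableSpace Ω›)
    (q : Fin 2 → 𝒮 → ℝ) (qy : Fin 2 → 𝒮 → ℝ) (τ : 𝒮 → ℝ)
    (hq : ∀ d, μ[R d | MeasurableSpace.comap S inferInstance]
      =ᵐ[μ] fun ω => q d (S ω))
    (hqy : ∀ d, μ[fun ω => R d ω * Y d ω | MeasurableSpace.comap S inferInstance]
      =ᵐ[μ] fun ω => qy d (S ω))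
    (hτ : μ[fun ω => Y 1 ω - Y 0 ω | MeasurableSpace.comap S inferInstance]
      =ᵐ[μ] fun ω => τ (S ω))
    (Λ : ℝ)
    (hΛ : Λ = ∫ ω, q 1 (S ω) * q 0 (S ω) / (ν * q 1 (S ω) + (1 - ν) * q 0 (S ω)) ∂μ)
    (hΛpos : 0 < Λ)
    (hCI : CondIndepFun (MeasurableSpace.comap S inferInstance) hle
      (fun ω => (Y 1 ω, Y 0 ω)) (fun ω => (R 1 ω, R 0 ω)) μ) :
    Λ⁻¹ * ∫ ω, (qy 1 (S ω) * q 0 (S ω) - qy 0 (S ω) * q 1 (S ω))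
        / (ν * q 1 (S ω) + (1 - ν) * q 0 (S ω)) ∂μ
      = ∫ ω, τ (S ω) *
          (Λ⁻¹ * (q 1 (S ω) * q 0 (S ω) / (ν * q 1 (S ω) + (1 - ν) * q 0 (S ω)))) ∂μ := by
  classical
  -- atoms
  set A : 𝒮 → Set Ω := fun s => S ⁻¹' {s} with hA
  have hA_mS : ∀ s, MeasurableSet[MeasurableSpace.comap S inferInstance] (A s) :=
    fun s => ⟨{s}, measurableSet_singleton s, rfl⟩
  have hA_mΩ : ∀ s, MeasurableSet (A s) := fun s => hle _ (hA_mS s)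
  -- integrability facts
  have hRint : ∀ d, Integrable (R d) μ := by
    intro d
    refine (integrable_const (1 : ℝ)).mono' (hRmeas d).aestronglyMeasurable ?_
    filter_upwards with ω
    rcases hR01 d ω with h | h <;> simp [h]
  have hRYint : ∀ d, Integrable (fun ω => R d ω * Y d ω) μ := by
    intro d
    refine (hYint d).bdd_mul (hRmeas d).aestronglyMeasurable (c := 1) (Filter.Eventually.of_forall fun ω => ?_)
    rcases hR01 d ω with h | h <;> simp [h]
  have hYsubint : Integrable (fun ω => Y 1 ω - Y 0 ω) μ := (hYint 1).sub (hYint 0)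
  -- integrals of compositions with S over atoms are values times measure
  have hcomp : ∀ (H : 𝒮 → ℝ) (s : 𝒮),
      ∫ ω in A s, H (S ω) ∂μ = H s * (μ (A s)).toReal := by
    intro H s
    calc ∫ ω in A s, H (S ω) ∂μ = ∫ _ω in A s, H s ∂μ :=
          setIntegral_congr_fun (hA_mΩ s) (fun ω hω => by
            have hω' : S ω = s := hω
            rw [hω'])
      _ = H s * (μ (A s)).toReal := by rw [setIntegral_const, smul_eq_mul, mul_comm, measureReal_def]
  -- version identities over atoms
  have hq_atom : ∀ d s, q d s * (μ (A s)).toReal = ∫ ω in A s, R d ω ∂μ := by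
    intro d s
    calc q d s * (μ (A s)).toReal = ∫ ω in A s, q d (S ω) ∂μ := (hcomp (q d) s).symm
      _ = ∫ ω in A s, (μ[R d | MeasurableSpace.comap S inferInstance]) ω ∂μ :=
          (setIntegral_congr_ae (hA_mΩ s) ((hq d).mono fun ω h _ => h)).symm
      _ = ∫ ω in A s, R d ω ∂μ := setIntegral_condExp hle (hRint d) (hA_mS s)
  have hqy_atom : ∀ d s, qy d s * (μ (A s)).toReal = ∫ ω in A s, R d ω * Y d ω ∂μ := by
    intro d s
    calc qy d s * (μ (A s)).toReal = ∫ ω in A s, qy d (S ω) ∂μ := (hcomp (qy d) s).symm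
      _ = ∫ ω in A s,
            (μ[fun ω => R d ω * Y d ω | MeasurableSpace.comap S inferInstance]) ω ∂μ :=
          (setIntegral_congr_ae (hA_mΩ s) ((hqy d).mono fun ω h _ => h)).symm
      _ = ∫ ω in A s, R d ω * Y d ω ∂μ := setIntegral_condExp hle (hRYint d) (hA_mS s)
  have hτ_atom : ∀ s, τ s * (μ (A s)).toReal = ∫ ω in A s, (Y 1 ω - Y 0 ω) ∂μ := by
    intro s
    calc τ s * (μ (A s)).toReal = ∫ ω in A s, τ (S ω) ∂μ := (hcomp τ s).symm
      _ = ∫ ω in A s,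
            (μ[fun ω => Y 1 ω - Y 0 ω | MeasurableSpace.comap S inferInstance]) ω ∂μ :=
          (setIntegral_congr_ae (hA_mΩ s) (hτ.mono fun ω h _ => h)).symm
      _ = ∫ ω in A s, (Y 1 ω - Y 0 ω) ∂μ := setIntegral_condExp hle hYsubint (hA_mS s)
  -- the key independence consequence on each non-null atom
  have hkey : ∀ d s, μ (A s) ≠ 0 →
      (∫ ω in A s, R d ω * Y d ω ∂μ) * (μ (A s)).toReal
        = (∫ ω in A s, R d ω ∂μ) * ∫ ω in A s, Y d ω ∂μ := by
    intro d s hps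
    set p : ℝ := (μ (A s)).toReal with hpdef
    have hμsfin : μ (A s) ≠ ⊤ := measure_ne_top μ _
    have hppos : 0 < p := ENNReal.toReal_pos hps hμsfin
    obtain ⟨ω₀, hω₀⟩ := nonempty_of_measure_ne_zero hps
    have hω₀S : S ω₀ = s := hω₀
    -- conditional measure on the atom
    set μs : Measure Ω := (μ (A s))⁻¹ • μ.restrict (A s) with hμs
    haveI : IsProbabilityMeasure μs := by
      constructor
      rw [hμs, Measure.smul_apply, Measure.restrict_apply_univ, smul_eq_mul,
        ENNReal.inv_mul_cancel hps hμsfin]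
    have hμs_apply : ∀ B : Set Ω, MeasurableSet B →
        (μs B).toReal = p⁻¹ * (μ (B ∩ A s)).toReal := by
      intro B hB
      rw [hμs, Measure.smul_apply, Measure.restrict_apply hB, smul_eq_mul,
        ENNReal.toReal_mul, ENNReal.toReal_inv]
    -- conditional expectations of indicator sets are constant on the atom
    have hconst : ∀ (B : Set Ω), MeasurableSet B →
        (μ⟦B | MeasurableSpace.comap S inferInstance⟧) ω₀ * p = (μ (B ∩ A s)).toReal := by
      intro B hB
      have hsm : StronglyMeasurable[MeasurableSpace.comap S inferInstance]
          (μ⟦B | MeasurableSpace.comap S inferInstance⟧) := stronglyMeasurable_condExp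
      have h1 : ∫ ω in A s, (μ⟦B | MeasurableSpace.comap S inferInstance⟧) ω ∂μ
          = (μ⟦B | MeasurableSpace.comap S inferInstance⟧) ω₀ * p := by
        calc ∫ ω in A s, (μ⟦B | MeasurableSpace.comap S inferInstance⟧) ω ∂μ
            = ∫ _ω in A s, (μ⟦B | MeasurableSpace.comap S inferInstance⟧) ω₀ ∂μ :=
              setIntegral_congr_fun (hA_mΩ s) (fun ω hω =>
                const_on_atom hsm.measurable (by
                  have hω' : S ω = s := hω
                  rw [hω', hω₀S]))
          _ = _ := by rw [setIntegral_const, smul_eq_mul, mul_comm, measureReal_def]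
      have h2 : ∫ ω in A s, (μ⟦B | MeasurableSpace.comap S inferInstance⟧) ω ∂μ
          = ∫ ω in A s, Set.indicator B (fun _ => (1 : ℝ)) ω ∂μ :=
        setIntegral_condExp hle ((integrable_const (1:ℝ)).indicator hB) (hA_mS s)
      have h3 : ∫ ω in A s, Set.indicator B (fun _ => (1 : ℝ)) ω ∂μ
          = (μ (B ∩ A s)).toReal := by
        rw [setIntegral_indicator hB, setIntegral_const, smul_eq_mul, mul_one,
          Set.inter_comm, measureReal_def]
      rw [← h1, h2, h3]
    -- product formula from conditional independence
    have hYpmeas : Measurable (fun ω => (Y 1 ω, Y 0 ω)) := (hYmeas 1).prodMk (hYmeas 0)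
    have hRpmeas : Measurable (fun ω => (R 1 ω, R 0 ω)) := (hRmeas 1).prodMk (hRmeas 0)
    have hCI' := (condIndepFun_iff_condExp_inter_preimage_eq_mul hYpmeas hRpmeas).mp hCI
    have hmeas_prod : ∀ (u v : Set (ℝ × ℝ)), MeasurableSet u → MeasurableSet v →
        (μ ((fun ω => (Y 1 ω, Y 0 ω)) ⁻¹' u ∩ (fun ω => (R 1 ω, R 0 ω)) ⁻¹' v ∩ A s)).toReal * p
          = (μ ((fun ω => (Y 1 ω, Y 0 ω)) ⁻¹' u ∩ A s)).toReal
            * (μ ((fun ω => (R 1 ω, R 0 ω)) ⁻¹' v ∩ A s)).toReal := by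
      intro u v hu hv
      set B := (fun ω => (Y 1 ω, Y 0 ω)) ⁻¹' u with hBdef
      set C := (fun ω => (R 1 ω, R 0 ω)) ⁻¹' v with hCdef
      have hB : MeasurableSet B := hYpmeas hu
      have hC : MeasurableSet C := hRpmeas hv
      have hBC : MeasurableSet (B ∩ C) := hB.inter hC
      have hsmB : StronglyMeasurable[MeasurableSpace.comap S inferInstance]
          (μ⟦B | MeasurableSpace.comap S inferInstance⟧) := stronglyMeasurable_condExp
      have hsmC : StronglyMeasurable[MeasurableSpace.comap S inferInstance]
          (μ⟦C | MeasurableSpace.comap S inferInstance⟧) := stronglyMeasurable_condExp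
      -- integrate the conditional independence identity over the atom
      have hint1 : ∫ ω in A s, (μ⟦B ∩ C | MeasurableSpace.comap S inferInstance⟧) ω ∂μ
          = ∫ ω in A s, (μ⟦B | MeasurableSpace.comap S inferInstance⟧) ω
              * (μ⟦C | MeasurableSpace.comap S inferInstance⟧) ω ∂μ :=
        setIntegral_congr_ae (hA_mΩ s) ((hCI' u v hu hv).mono fun ω h _ => h)
      have hint2 : ∫ ω in A s, (μ⟦B | MeasurableSpace.comap S inferInstance⟧) ω
              * (μ⟦C | MeasurableSpace.comap S inferInstance⟧) ω ∂μ
          = ((μ⟦B | MeasurableSpace.comap S inferInstance⟧) ω₀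
              * (μ⟦C | MeasurableSpace.comap S inferInstance⟧) ω₀) * p := by
        calc ∫ ω in A s, (μ⟦B | MeasurableSpace.comap S inferInstance⟧) ω
                * (μ⟦C | MeasurableSpace.comap S inferInstance⟧) ω ∂μ
            = ∫ _ω in A s, (μ⟦B | MeasurableSpace.comap S inferInstance⟧) ω₀
                * (μ⟦C | MeasurableSpace.comap S inferInstance⟧) ω₀ ∂μ :=
              setIntegral_congr_fun (hA_mΩ s) (fun ω hω => by
                have hSω : S ω = S ω₀ := by
                  have hω' : S ω = s := hω
                  rw [hω', hω₀S]
                rw [const_on_atom hsmB.measurable hSω, const_on_atom hsmC.measurable hSω])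
          _ = _ := by rw [setIntegral_const, smul_eq_mul, mul_comm, measureReal_def]
      have hBCa : ∫ ω in A s, (μ⟦B ∩ C | MeasurableSpace.comap S inferInstance⟧) ω ∂μ
          = (μ (B ∩ C ∩ A s)).toReal := by
        rw [setIntegral_condExp hle ((integrable_const (1:ℝ)).indicator hBC) (hA_mS s),
          setIntegral_indicator hBC, setIntegral_const, smul_eq_mul, mul_one, Set.inter_comm, measureReal_def]
      have e1 := hconst B hB
      have e2 := hconst C hC
      have e3 : (μ (B ∩ C ∩ A s)).toReal
          = ((μ⟦B | MeasurableSpace.comap S inferInstance⟧) ω₀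
              * (μ⟦C | MeasurableSpace.comap S inferInstance⟧) ω₀) * p := by
        rw [← hBCa, hint1, hint2]
      rw [e3, ← e1, ← e2]; ring
    -- independence under the conditional measure
    have hindep : IndepFun (fun ω => (Y 1 ω, Y 0 ω)) (fun ω => (R 1 ω, R 0 ω)) μs := by
      rw [indepFun_iff_measure_inter_preimage_eq_mul]
      intro u v hu hv
      have hB : MeasurableSet ((fun ω => (Y 1 ω, Y 0 ω)) ⁻¹' u) := hYpmeas hu
      have hC : MeasurableSet ((fun ω => (R 1 ω, R 0 ω)) ⁻¹' v) := hRpmeas hv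
      have hfin1 : μs ((fun ω => (Y 1 ω, Y 0 ω)) ⁻¹' u ∩ (fun ω => (R 1 ω, R 0 ω)) ⁻¹' v) ≠ ⊤ :=
        measure_ne_top _ _
      have hfin2 : μs ((fun ω => (Y 1 ω, Y 0 ω)) ⁻¹' u) * μs ((fun ω => (R 1 ω, R 0 ω)) ⁻¹' v)
          ≠ ⊤ := ENNReal.mul_ne_top (measure_ne_top _ _) (measure_ne_top _ _)
      rw [← ENNReal.toReal_eq_toReal_iff' hfin1 hfin2, ENNReal.toReal_mul,
        hμs_apply _ (hB.inter hC), hμs_apply _ hB, hμs_apply _ hC]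
      have hmp := hmeas_prod u v hu hv
      have hp2 : p ≠ 0 := ne_of_gt hppos
      field_simp
      nlinarith [hmp]
    -- independence of `Y d` and `R d` under the conditional measure
    have hind_d : IndepFun (Y d) (R d) μs := by
      fin_cases d
      · exact hindep.comp measurable_snd measurable_snd
      · exact hindep.comp measurable_fst measurable_fst
    -- integral product formula
    have hRμs : Integrable (R d) μs :=
      ((hRint d).restrict).smul_measure (ENNReal.inv_ne_top.mpr hps)
    have hYμs : Integrable (Y d) μs :=
      ((hYint d).restrict).smul_measure (ENNReal.inv_ne_top.mpr hps)
    have hmul := (hind_d.symm.integral_mul_eq_mul_integral hRμs.aestronglyMeasurable hYμs.aestronglyMeasurable)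
    have hsmul : ∀ f : Ω → ℝ, ∫ ω, f ω ∂μs = p⁻¹ * ∫ ω in A s, f ω ∂μ := by
      intro f
      rw [hμs, integral_smul_measure, ENNReal.toReal_inv, smul_eq_mul]
    have hmul' : p⁻¹ * ∫ ω in A s, R d ω * Y d ω ∂μ
        = (p⁻¹ * ∫ ω in A s, R d ω ∂μ) * (p⁻¹ * ∫ ω in A s, Y d ω ∂μ) := by
      rw [← hsmul, ← hsmul, ← hsmul]
      simpa using hmul
    have hp2 : p ≠ 0 := ne_of_gt hppos
    field_simp at hmul'
    nlinarith [hmul']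
  -- pointwise identity on non-null atoms
  have hpoint : ∀ s : 𝒮, μ (A s) ≠ 0 →
      Λ⁻¹ * ((qy 1 s * q 0 s - qy 0 s * q 1 s) / (ν * q 1 s + (1 - ν) * q 0 s))
        = τ s * (Λ⁻¹ * (q 1 s * q 0 s / (ν * q 1 s + (1 - ν) * q 0 s))) := by
    intro s hps
    set p : ℝ := (μ (A s)).toReal with hpdef
    have hppos : 0 < p := ENNReal.toReal_pos hps (measure_ne_top μ _)
    have hp2 : p ≠ 0 := ne_of_gt hppos
    have hnum : qy 1 s * q 0 s - qy 0 s * q 1 s = τ s * (q 1 s * q 0 s) := by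
      have hq1 := hq_atom 1 s
      have hq0 := hq_atom 0 s
      have hqy1 := hqy_atom 1 s
      have hqy0 := hqy_atom 0 s
      have hk1 := hkey 1 s hps
      have hk0 := hkey 0 s hps
      have hτs := hτ_atom s
      have hτs' : τ s * p = (∫ ω in A s, Y 1 ω ∂μ) - ∫ ω in A s, Y 0 ω ∂μ := by
        rw [hτs, integral_sub ((hYint 1).restrict) ((hYint 0).restrict)]
      set a1 := ∫ ω in A s, R 1 ω ∂μ
      set a0 := ∫ ω in A s, R 0 ω ∂μ
      set b1 := ∫ ω in A s, Y 1 ω ∂μ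
      set b0 := ∫ ω in A s, Y 0 ω ∂μ
      set c1 := ∫ ω in A s, R 1 ω * Y 1 ω ∂μ
      set c0 := ∫ ω in A s, R 0 ω * Y 0 ω ∂μ
      have h1 : qy 1 s = c1 / p := eq_div_of_mul_eq hp2 hqy1
      have h0 : qy 0 s = c0 / p := eq_div_of_mul_eq hp2 hqy0
      have h1' : q 1 s = a1 / p := eq_div_of_mul_eq hp2 hq1
      have h0' : q 0 s = a0 / p := eq_div_of_mul_eq hp2 hq0
      have hτ' : τ s = (b1 - b0) / p := eq_div_of_mul_eq hp2 hτs'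
      have hc1 : c1 = a1 * b1 / p := eq_div_of_mul_eq hp2 hk1
      have hc0 : c0 = a0 * b0 / p := eq_div_of_mul_eq hp2 hk0
      rw [h1, h0, h1', h0', hτ', hc1, hc0]
      field_simp
    rw [hnum, mul_div_assoc]
    ring
  -- reduce both integrals to sums over 𝒮
  have hint_comp : ∀ H : 𝒮 → ℝ,
      ∫ ω, H (S ω) ∂μ = ∑ s : 𝒮, H s * (μ (A s)).toReal := by
    intro H
    have hHm : Measurable H := measurable_of_countable H
    rw [← integral_map hSmeas.aemeasurable hHm.aestronglyMeasurable,
      integral_fintype .of_finite]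
    refine Finset.sum_congr rfl fun s _ => ?_
    rw [measureReal_def, Measure.map_apply hSmeas (measurableSet_singleton s), smul_eq_mul, mul_comm]
  rw [← integral_const_mul,
    hint_comp (fun s => Λ⁻¹ * ((qy 1 s * q 0 s - qy 0 s * q 1 s)
      / (ν * q 1 s + (1 - ν) * q 0 s))),
    hint_comp (fun s => τ s * (Λ⁻¹ * (q 1 s * q 0 s / (ν * q 1 s + (1 - ν) * q 0 s))))]
  refine Finset.sum_congr rfl fun s _ => ?_
  by_cases hps : μ (A s) = 0
  · simp [hps]
  · rw [hpoint s hps]
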